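/- For n ≥ 2, a_n = 1 + Σ_{j=1}^{n} b(n,j) + Σ_{d=0}^{n−2} Σ_{i=1}^{n−d} c(n−d, i), where a_n = |L_n|, b(n,j) counts members of B_n ending in j, and c(m,i) counts members of C_m ending in i. (The leading 1 accounts for the excluded permutation (n−1)(n−2)⋯1n.) -/

import Mathlib

open List

/-- `w` is a linear permutation of `[n] = {1,…,n}` written in one-line notation. -/
def IsPermOf (n : ℕ) (w : List ℕ) : Prop :=
  w.Perm ((List.range n).map (· + 1))

/-- occurrence of the vincular pattern 1̄2̄3 : positions a, a+1, c with c > a+1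
forming an increasing triple. -/
def Occ123 (w : List ℕ) : Prop :=
  ∃ a c, a + 1 < c ∧ c < w.length ∧
    w.getD a 0 < w.getD (a + 1) 0 ∧ w.getD (a + 1) 0 < w.getD c 0

/-- occurrence of the vincular pattern 41\overline{23} : positions a < b < c (and c+1)
with w_b < w_c < w_{c+1} < w_a. -/
def Occ4123 (w : List ℕ) : Prop :=
  ∃ a b c, a < b ∧ b < c ∧ c + 1 < w.length ∧
    w.getD b 0 < w.getD c 0 ∧ w.getD c 0 < w.getD (c + 1) 0 ∧
    w.getD (c + 1) 0 < w.getD a 0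

/-- occurrence of the vincular pattern 1\overline{23} : positions a < b (and b+1)
forming an increasing triple. -/
def Occ1_23 (w : List ℕ) : Prop :=
  ∃ a b, a < b ∧ b + 1 < w.length ∧
    w.getD a 0 < w.getD b 0 ∧ w.getD b 0 < w.getD (b + 1) 0

/-- occurrence of the vincular pattern \overline{23}41 : positions a, a+1, c, d with
a+1 < c < d and w_d < w_a < w_{a+1} < w_c. -/
def Occ2341 (w : List ℕ) : Prop :=
  ∃ a c d, a + 1 < c ∧ c < d ∧ d < w.length ∧
    w.getD d 0 < w.getD a 0 ∧ w.getD a 0 < w.getD (a + 1) 0 ∧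
    w.getD (a + 1) 0 < w.getD c 0

/-- a circular permutation (represented by any linear reading `w`) avoids
\overline{23}41 iff no cyclic rotation of `w` contains it. -/
def CircAvoids2341 (w : List ℕ) : Prop := ∀ k, ¬ Occ2341 (w.rotate k)

/-- the set `L_n` of linear permutations of `[n]` avoiding both 1̄2̄3 and 41\overline{23}. -/
def Lset (n : ℕ) : Set (List ℕ) :=
  {w | IsPermOf n w ∧ ¬ Occ123 w ∧ ¬ Occ4123 w}

/-- the permutation (n−1)(n−2)⋯1 n. -/
def excludedPerm (n : ℕ) : List ℕ :=
  ((List.range (n - 1)).map (· + 1)).reverse ++ [n]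

/-- `L_n^* = L_n \ {(n−1)(n−2)⋯1n}`. -/
def Lstar (n : ℕ) : Set (List ℕ) := Lset n \ {excludedPerm n}

/-- `B_n`: members of `L_n^*` in which 1 occurs to the right of n. -/
def Bset (n : ℕ) : Set (List ℕ) :=
  {w ∈ Lstar n | w.idxOf n < w.idxOf 1}

/-- `C_n`: members of `L_n^*` in which 1 occurs to the left of n and 2 to its right. -/
def Cset (n : ℕ) : Set (List ℕ) :=
  {w ∈ Lstar n | w.idxOf 1 < w.idxOf n ∧ w.idxOf n < w.idxOf 2}

/-- members of `B_n` ending in the two letters i, j. -/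
def Bnij (n i j : ℕ) : Set (List ℕ) :=
  {w ∈ Bset n | ∃ u, w = u ++ [i, j]}

/-- members of `C_n` ending in the two letters i, j. -/
def Cnij (n i j : ℕ) : Set (List ℕ) :=
  {w ∈ Cset n | ∃ u, w = u ++ [i, j]}

noncomputable def bcount (n i j : ℕ) : ℕ := (Bnij n i j).ncard
noncomputable def ccount (n i j : ℕ) : ℕ := (Cnij n i j).ncard

/-- `b(n,j)`: the number of members of `B_n` ending in the letter j. -/
noncomputable def bLast (n j : ℕ) : ℕ := Set.ncard {w ∈ Bset n | ∃ u, w = u ++ [j]}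

/-- `c(n,j)`: the number of members of `C_n` ending in the letter j. -/
noncomputable def cLast (n j : ℕ) : ℕ := Set.ncard {w ∈ Cset n | ∃ u, w = u ++ [j]}

/-- `V_n`: linear permutations of `[n]` avoiding both 1̄2̄3 and 1\overline{23}. -/
def Vset (n : ℕ) : Set (List ℕ) :=
  {w | IsPermOf n w ∧ ¬ Occ123 w ∧ ¬ Occ1_23 w}

/-- `v(n,j)`: the number of members of `V_n` ending in the letter j. -/
noncomputable def vcount (n j : ℕ) : ℕ := Set.ncard {w ∈ Vset n | ∃ u, w = u ++ [j]}

namespace Stmt16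

/-! ### Basic facts about `IsPermOf` -/

lemma base_mem {n x : ℕ} : x ∈ (List.range n).map (· + 1) ↔ 1 ≤ x ∧ x ≤ n := by
  simp only [List.mem_map, List.mem_range]
  constructor
  · rintro ⟨i, hi, rfl⟩; beta_reduce; omega
  · rintro ⟨h1, h2⟩; exact ⟨x - 1, by omega, by beta_reduce; omega⟩

lemma permLen {n : ℕ} {w : List ℕ} (h : IsPermOf n w) : w.length = n := by
  simpa using List.Perm.length_eq h

lemma permMem {n : ℕ} {w : List ℕ} (h : IsPermOf n w) {x : ℕ} :
    x ∈ w ↔ 1 ≤ x ∧ x ≤ n := by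
  rw [List.Perm.mem_iff h (a := x), base_mem]

lemma permNodup {n : ℕ} {w : List ℕ} (h : IsPermOf n w) : w.Nodup := by
  refine (List.Perm.nodup_iff h).mpr ?_
  exact (List.nodup_range).map (by intro a b hab; beta_reduce at hab; omega)

lemma permOneLe {n : ℕ} {w : List ℕ} (h : IsPermOf n w) {r : ℕ}
    (hr : r < w.length) : 1 ≤ w.getD r 0 := by
  rw [List.getD_eq_getElem _ _ hr]
  exact ((permMem h).mp (List.getElem_mem hr)).1

lemma permLeN {n : ℕ} {w : List ℕ} (h : IsPermOf n w) {r : ℕ}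
    (hr : r < w.length) : w.getD r 0 ≤ n := by
  rw [List.getD_eq_getElem _ _ hr]
  exact ((permMem h).mp (List.getElem_mem hr)).2

lemma permInj {n : ℕ} {w : List ℕ} (h : IsPermOf n w) {r s : ℕ}
    (hr : r < w.length) (hs : s < w.length) (hval : w.getD r 0 = w.getD s 0) :
    r = s := by
  rw [List.getD_eq_getElem _ _ hr, List.getD_eq_getElem _ _ hs] at hval
  exact ((permNodup h).getElem_inj_iff).mp hval

lemma permGetDIndexOf {w : List ℕ} {x : ℕ}
    (hx : x ∈ w) : w.getD (w.idxOf x) 0 = x := by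
  rw [List.getD_eq_getElem _ _ (List.idxOf_lt_length_iff.mpr hx)]
  exact List.getElem_idxOf _

lemma permIndexOfLt {w : List ℕ} {x : ℕ}
    (hx : x ∈ w) : w.idxOf x < w.length := List.idxOf_lt_length_iff.mpr hx

lemma permOf_finite (n : ℕ) : {w | IsPermOf n w}.Finite := by
  have hsub : {w | IsPermOf n w} ⊆ ↑(((List.range n).map (· + 1)).permutations.toFinset) := by
    intro w hw
    simp only [Finset.coe_sort_coe, List.coe_toFinset, Set.mem_setOf_eq, List.mem_permutations]
    exact hw
  exact Set.Finite.subset (Finset.finite_toSet _) hsub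

lemma Lset_finite (n : ℕ) : (Lset n).Finite :=
  (permOf_finite n).subset (fun w hw => hw.1)

/-! ### fiberwise counting by last letter -/

lemma ncard_eq_sum_last (S : Set (List ℕ)) (hS : S.Finite) (m : ℕ)
    (h : ∀ w ∈ S, ∃ u j, 1 ≤ j ∧ j ≤ m ∧ w = u ++ [j]) :
    S.ncard = ∑ j ∈ Finset.Icc 1 m, {w ∈ S | ∃ u, w = u ++ [j]}.ncard := by
  classical
  have hfib : ∀ j, {w ∈ S | ∃ u, w = u ++ [j]} =
      ↑(hS.toFinset.filter (fun w => w.getLastD 0 = j)) := by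
    intro j
    ext w
    simp only [Set.mem_setOf_eq, Finset.coe_filter, Set.Finite.mem_toFinset]
    constructor
    · rintro ⟨hw, u, rfl⟩
      exact ⟨hw, List.getLastD_concat⟩
    · rintro ⟨hw, hlast⟩
      refine ⟨hw, ?_⟩
      obtain ⟨u, j', _, _, rfl⟩ := h w hw
      rw [List.getLastD_concat] at hlast
      exact ⟨u, by rw [hlast]⟩
  have hcard : S.ncard = hS.toFinset.card := Set.ncard_eq_toFinset_card S hS
  rw [hcard, Finset.card_eq_sum_card_fiberwise
      (f := fun w => w.getLastD 0) (t := Finset.Icc 1 m) ?_]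
  · refine Finset.sum_congr rfl (fun j _ => ?_)
    rw [hfib j, Set.ncard_coe_finset]
  · intro w hw
    obtain ⟨u, j', h1, h2, rfl⟩ := h w (hS.mem_toFinset.mp hw)
    simp only [List.getLastD_concat]
    exact Finset.mem_Icc.mpr ⟨h1, h2⟩

end Stmt16
namespace Stmt16

/-! ### the insertion map `psi` and deletion map `phi` -/

def psiF (x : ℕ) : List ℕ := if x = 1 then [2, 1] else [x + 1]
def psi (v : List ℕ) : List ℕ := v.flatMap psiF
def phiF (x : ℕ) : List ℕ := if x = 1 then [] else [x - 1]
def phi (w : List ℕ) : List ℕ := w.flatMap phiF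

lemma psi_eq_map {l : List ℕ} (h : ∀ x ∈ l, x ≠ 1) : psi l = l.map (· + 1) := by
  induction l with
  | nil => rfl
  | cons a l ih =>
    have ha : a ≠ 1 := h a (by simp)
    simp only [psi, List.flatMap_cons, List.map_cons, psiF, if_neg ha]
    rw [← psi]
    rw [ih (fun x hx => h x (by simp [hx]))]
    rfl

lemma psi_split {s t : List ℕ} (hs : ∀ x ∈ s, x ≠ 1) (ht : ∀ x ∈ t, x ≠ 1) :
    psi (s ++ 1 :: t) = s.map (· + 1) ++ 2 :: 1 :: t.map (· + 1) := by
  simp only [psi, List.flatMap_append, List.flatMap_cons]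
  rw [← psi, ← psi, psi_eq_map hs, psi_eq_map ht]
  rfl

lemma phi_append (x y : List ℕ) : phi (x ++ y) = phi x ++ phi y := by
  simp [phi]

lemma phi_psi {v : List ℕ} (h : ∀ x ∈ v, 1 ≤ x) : phi (psi v) = v := by
  induction v with
  | nil => rfl
  | cons a l ih =>
    have ha : 1 ≤ a := h a (by simp)
    have ih' := ih (fun x hx => h x (by simp [hx]))
    have e1 : psi (a :: l) = psiF a ++ psi l := by simp [psi]
    have e3 : phi (psiF a) = [a] := by
      by_cases h1 : a = 1
      · subst h1; rfl
      · simp only [psiF, if_neg h1, phi, List.flatMap_cons, List.flatMap_nil, phiF]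
        rw [if_neg (by omega)]
        simp
    rw [e1, phi_append, ih', e3]
    rfl

lemma psi_injOn {v v' : List ℕ} (h : ∀ x ∈ v, 1 ≤ x) (h' : ∀ x ∈ v', 1 ≤ x)
    (heq : psi v = psi v') : v = v' := by
  rw [← phi_psi h, ← phi_psi h', heq]

/-! ### psi and phi on the base permutation -/

lemma psi_base (m : ℕ) (hm : 1 ≤ m) :
    psi ((List.range m).map (· + 1)) ~ (List.range (m + 1)).map (· + 1) := by
  induction m with
  | zero => omega
  | succ k ih =>
    rcases Nat.eq_or_lt_of_le hm with h | h
    · simp only [← h]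
      decide
    · have hk : 1 ≤ k := by omega
      rw [List.range_succ, List.map_append, List.range_succ (n := k + 1), List.map_append]
      simp only [psi, List.flatMap_append]
      rw [← psi]
      refine (ih hk).append ?_
      simp only [List.map_cons, List.map_nil, List.flatMap_cons, List.flatMap_nil, psiF]
      rw [if_neg (by omega)]
      rfl

lemma phi_base (m : ℕ) :
    phi ((List.range (m + 1)).map (· + 1)) = (List.range m).map (· + 1) := by
  induction m with
  | zero => decide
  | succ k ih =>
    rw [List.range_succ (n := k + 1), List.map_append]
    simp only [phi, List.flatMap_append]
    rw [← phi, ih, List.range_succ (n := k), List.map_append]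
    simp only [List.map_cons, List.map_nil, List.flatMap_cons, List.flatMap_nil, phiF]
    rw [if_neg (by omega)]
    rfl

lemma psi_perm {m : ℕ} {v : List ℕ} (hv : IsPermOf m v) (hm : 1 ≤ m) :
    IsPermOf (m + 1) (psi v) := by
  unfold IsPermOf psi
  exact (List.Perm.flatMap_right psiF hv).trans (psi_base m hm)

lemma phi_perm {n : ℕ} {w : List ℕ} (hw : IsPermOf n w) (hn : 1 ≤ n) :
    IsPermOf (n - 1) (phi w) := by
  have h1 : n - 1 + 1 = n := by omega
  unfold IsPermOf
  have h2 := phi_base (n - 1)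
  rw [h1] at h2
  rw [← h2]
  exact List.Perm.flatMap_right phiF hw

end Stmt16
namespace Stmt16

/-! ### getD facts for the split forms -/

def vof (s t : List ℕ) : List ℕ := s ++ 1 :: t
def wof (s t : List ℕ) : List ℕ := s.map (· + 1) ++ 2 :: 1 :: t.map (· + 1)

lemma len_vof (s t : List ℕ) : (vof s t).length = s.length + 1 + t.length := by
  simp [vof]; omega

lemma len_wof (s t : List ℕ) : (wof s t).length = s.length + 2 + t.length := by
  simp [wof]; omega

lemma wof_eq_psi {s t : List ℕ} (hs : ∀ x ∈ s, x ≠ 1) (ht : ∀ x ∈ t, x ≠ 1) :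
    wof s t = psi (vof s t) := (psi_split hs ht).symm

/-- positions left of (and including) the inserted pair -/
lemma G1 (s t : List ℕ) {q : ℕ} (hq : q ≤ s.length) :
    (wof s t).getD q 0 = (vof s t).getD q 0 + 1 := by
  rcases Nat.lt_or_ge q s.length with h | h
  · rw [vof, wof, List.getD_append _ _ _ _ (by simpa using h),
      List.getD_append _ _ _ _ h,
      List.getD_eq_getElem _ _ (by simpa using h), List.getD_eq_getElem _ _ h,
      List.getElem_map]
  · have hq' : q = s.length := by omega
    subst hq'
    rw [vof, wof, List.getD_append_right _ _ _ _ (by simp),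
      List.getD_append_right _ _ _ _ (le_refl _)]
    simp

lemma G2 (s t : List ℕ) : (wof s t).getD (s.length + 1) 0 = 1 := by
  rw [wof, List.getD_append_right _ _ _ _ (by simp)]
  simp

lemma G3 (s t : List ℕ) {q : ℕ} (hq : s.length + 2 ≤ q) (hq' : q < (wof s t).length) :
    (wof s t).getD q 0 = (vof s t).getD (q - 1) 0 + 1 := by
  rw [len_wof] at hq'
  rw [wof, List.getD_append_right _ _ _ _ (by simp; omega)]
  rw [vof, List.getD_append_right _ _ _ _ (by omega)]
  simp only [List.length_map]
  have e1 : q - s.length = (q - s.length - 2) + 2 := by omega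
  have e2 : q - 1 - s.length = (q - s.length - 2) + 1 := by omega
  rw [e1, e2, List.getD_cons_succ, List.getD_cons_succ, List.getD_cons_succ]
  have hb : q - s.length - 2 < t.length := by omega
  rw [List.getD_eq_getElem _ _ (by simpa using hb), List.getD_eq_getElem _ _ hb,
    List.getElem_map]

lemma G4 (s t : List ℕ) : (vof s t).getD s.length 0 = 1 := by
  rw [vof, List.getD_append_right _ _ _ _ (le_refl _)]
  simp

/-- values of `vof` away from position `s.length` are ≥ 2 -/
lemma G6 {s t : List ℕ} (h2s : ∀ x ∈ s, 2 ≤ x) (h2t : ∀ x ∈ t, 2 ≤ x)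
    {q : ℕ} (hq : q < (vof s t).length) (hne : q ≠ s.length) :
    2 ≤ (vof s t).getD q 0 := by
  rw [len_vof] at hq
  rcases Nat.lt_or_ge q s.length with h | h
  · rw [vof, List.getD_append _ _ _ _ h, List.getD_eq_getElem _ _ h]
    exact h2s _ (List.getElem_mem h)
  · rw [vof, List.getD_append_right _ _ _ _ h]
    have e1 : q - s.length = (q - s.length - 1) + 1 := by omega
    rw [e1, List.getD_cons_succ]
    have hb : q - s.length - 1 < t.length := by omega
    rw [List.getD_eq_getElem _ _ hb]
    exact h2t _ (List.getElem_mem hb)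

/-- values of `wof` away from positions `s.length`, `s.length+1` are ≥ 3 -/
lemma G5 {s t : List ℕ} (h2s : ∀ x ∈ s, 2 ≤ x) (h2t : ∀ x ∈ t, 2 ≤ x)
    {r : ℕ} (hr : r < (wof s t).length) (h1 : r ≠ s.length) (h2 : r ≠ s.length + 1) :
    3 ≤ (wof s t).getD r 0 := by
  rw [len_wof] at hr
  rcases Nat.lt_or_ge r s.length with h | h
  · rw [G1 s t (le_of_lt h)]
    have := G6 h2s h2t (q := r) (by rw [len_vof]; omega) (by omega)
    omega
  · have h' : s.length + 2 ≤ r := by omega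
    rw [G3 s t h' (by rw [len_wof]; omega)]
    have := G6 h2s h2t (q := r - 1) (by rw [len_vof]; omega) (by omega)
    omega

/-- values of `wof` away from position `s.length+1` are ≥ 2 -/
lemma G5' {s t : List ℕ} (h2s : ∀ x ∈ s, 2 ≤ x) (h2t : ∀ x ∈ t, 2 ≤ x)
    {r : ℕ} (hr : r < (wof s t).length) (h2 : r ≠ s.length + 1) :
    2 ≤ (wof s t).getD r 0 := by
  rcases eq_or_ne r s.length with h | h
  · rw [h, G1 s t (le_refl _), G4]
  · have := G5 h2s h2t hr h h2
    omega

end Stmt16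
namespace Stmt16

lemma G3' (s t : List ℕ) {q : ℕ} (hq : s.length + 1 ≤ q) (hq' : q + 1 < (wof s t).length) :
    (wof s t).getD (q + 1) 0 = (vof s t).getD q 0 + 1 := by
  have := G3 s t (q := q + 1) (by omega) hq'
  rwa [Nat.add_sub_cancel] at this

def Lf (p q : ℕ) : ℕ := if q ≤ p then q else q + 1

lemma Lf_lt {p q q' : ℕ} (h : q < q') : Lf p q < Lf p q' := by
  unfold Lf; split <;> split <;> omega

lemma Lf_succ {p q : ℕ} (h : q ≠ p) : Lf p (q + 1) = Lf p q + 1 := by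
  unfold Lf; split <;> split <;> omega

lemma Lf_lt_len {s t : List ℕ} {q : ℕ} (h : q < (vof s t).length) :
    Lf s.length q < (wof s t).length := by
  rw [len_vof] at h; rw [len_wof]; unfold Lf; split <;> omega

lemma Lval (s t : List ℕ) {q : ℕ} (hq : q < (vof s t).length) :
    (wof s t).getD (Lf s.length q) 0 = (vof s t).getD q 0 + 1 := by
  unfold Lf
  split
  · exact G1 s t ‹_›
  · exact G3' s t (by omega) (by rw [len_wof]; rw [len_vof] at hq; omega)

/-! ### transfer of pattern 123 -/

lemma T2 {s t : List ℕ} (h : Occ123 (vof s t)) : Occ123 (wof s t) := by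
  obtain ⟨a, c, hac, hc, h1, h2⟩ := h
  have hlv := len_vof s t
  have hlw := len_wof s t
  rcases eq_or_ne a s.length with rfl | ha
  · have hc2 : s.length + 2 ≤ c := by omega
    have hw2 := G3' s t (q := s.length + 1) (by omega) (by omega)
    have hwc := G3' s t (q := c) (by omega) (by omega)
    rw [G4] at h1
    refine ⟨s.length + 1, c + 1, by omega, by omega, ?_, ?_⟩
    · rw [G2]; omega
    · omega
  · have ha1 : a + 1 < (vof s t).length := by omega
    have e1 := Lval s t (q := a) (by omega)
    have e2 := Lval s t ha1
    have e3 := Lval s t hc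
    rw [Lf_succ ha] at e2
    have hm := Lf_lt (p := s.length) hac
    rw [Lf_succ ha] at hm
    exact ⟨Lf s.length a, Lf s.length c, hm, Lf_lt_len hc, by omega, by omega⟩

lemma T1 {s t : List ℕ} (h2s : ∀ x ∈ s, 2 ≤ x) (h2t : ∀ x ∈ t, 2 ≤ x)
    (h : Occ123 (wof s t)) : Occ123 (vof s t) := by
  obtain ⟨a, c, hac, hc, h1, h2⟩ := h
  have hlv := len_vof s t
  have hlw := len_wof s t
  have hcne : c ≠ s.length + 1 := by
    rintro rfl
    rw [G2] at h2
    have := G5' h2s h2t (r := a + 1) (by omega) (by omega)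
    omega
  have hane : a ≠ s.length := by
    rintro rfl
    rw [G2] at h1
    have := G5' h2s h2t (r := s.length) (by omega) (by omega)
    omega
  rcases eq_or_ne a (s.length + 1) with rfl | hane2
  · have hc3 : s.length + 3 ≤ c := by omega
    have hw2 := G3' s t (q := s.length + 1) (by omega) (by omega)
    have hwc := G3 s t (q := c) (by omega) hc
    have hv6 := G6 h2s h2t (q := s.length + 1) (by omega) (by omega)
    refine ⟨s.length, c - 1, by omega, by omega, ?_, ?_⟩
    · rw [G4]; omega
    · omega
  · rcases Nat.lt_or_ge a s.length with halt | hage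
    · have e1 := G1 s t (q := a) (by omega)
      have e2 := G1 s t (q := a + 1) (by omega)
      rcases le_or_gt c s.length with hcp | hcp
      · have e3 := G1 s t hcp
        exact ⟨a, c, hac, by omega, by omega, by omega⟩
      · have hc2 : s.length + 2 ≤ c := by omega
        have e3 := G3 s t hc2 hc
        exact ⟨a, c - 1, by omega, by omega, by omega, by omega⟩
    · have hage2 : s.length + 2 ≤ a := by omega
      have e1 := G3 s t hage2 (by omega)
      have e2 := G3 s t (q := a + 1) (by omega) (by omega)
      rw [Nat.add_sub_cancel] at e2
      have e3 := G3 s t (q := c) (by omega) hc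
      refine ⟨a - 1, c - 1, by omega, by omega, ?_, ?_⟩
      · rw [show a - 1 + 1 = a from by omega]; omega
      · rw [show a - 1 + 1 = a from by omega]; omega

/-! ### transfer of pattern 4123 -/

lemma T4 {s t : List ℕ} (h2s : ∀ x ∈ s, 2 ≤ x) (h2t : ∀ x ∈ t, 2 ≤ x)
    (h : Occ4123 (vof s t)) : Occ4123 (wof s t) := by
  obtain ⟨a, b, c, hab, hbc, hc, h1, h2, h3⟩ := h
  have hlv := len_vof s t
  have hlw := len_wof s t
  have hcne : c ≠ s.length := by
    rintro rfl
    rw [G4] at h1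
    have := G6 h2s h2t (q := b) (by omega) (by omega)
    omega
  have e1 := Lval s t (q := a) (by omega)
  have e2 := Lval s t (q := b) (by omega)
  have e3 := Lval s t (q := c) (by omega)
  have e4 := Lval s t (q := c + 1) (by omega)
  rw [Lf_succ hcne] at e4
  refine ⟨Lf s.length a, Lf s.length b, Lf s.length c, Lf_lt hab, Lf_lt hbc, ?_, by omega, by omega, by omega⟩
  have := Lf_lt_len (s := s) (t := t) (q := c + 1) (by omega)
  rw [Lf_succ hcne] at this
  exact this

lemma T3 {s t : List ℕ} (h2s : ∀ x ∈ s, 2 ≤ x) (h2t : ∀ x ∈ t, 2 ≤ x)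
    (h : Occ4123 (wof s t)) : Occ4123 (vof s t) := by
  obtain ⟨a, b, c, hab, hbc, hc, h1, h2, h3⟩ := h
  have hlv := len_vof s t
  have hlw := len_wof s t
  have hcp1 : c ≠ s.length + 1 := by
    rintro rfl
    rw [G2] at h1
    have := G5' h2s h2t (r := b) (by omega) (by omega)
    omega
  have hcp : c ≠ s.length := by
    rintro rfl
    rw [G1 s t (le_refl _), G4] at h1
    have := G5 h2s h2t (r := b) (by omega) (by omega) (by omega)
    omega
  have hwc3 : 3 ≤ (wof s t).getD c 0 := G5 h2s h2t (by omega) hcp hcp1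
  have hc1p : c + 1 ≠ s.length := by
    intro heq
    have e := G1 s t (q := c + 1) (le_of_eq heq)
    have e2 : (vof s t).getD (c + 1) 0 = 1 := by rw [heq, G4]
    omega
  have hwc13 : 3 ≤ (wof s t).getD (c + 1) 0 := G5 h2s h2t (by omega) hc1p (by omega)
  have hap : a ≠ s.length := by
    rintro rfl
    rw [G1 s t (le_refl _), G4] at h3
    omega
  have hap1 : a ≠ s.length + 1 := by
    rintro rfl
    rw [G2] at h3
    omega
  rcases eq_or_ne b (s.length + 1) with rfl | hbp1
  · -- b = p + 1
    have halt : a < s.length := by omega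
    have hcge : s.length + 2 ≤ c := by omega
    have ea := G1 s t (q := a) (by omega)
    have eb := G2 s t
    have ec := G3 s t hcge (by omega)
    have ec1 := G3 s t (q := c + 1) (by omega) hc
    rw [Nat.add_sub_cancel] at ec1
    refine ⟨a, s.length, c - 1, halt, by omega, ?_, ?_, ?_, ?_⟩
    · rw [show c - 1 + 1 = c from by omega]; omega
    · rw [G4]; omega
    · rw [show c - 1 + 1 = c from by omega]; omega
    · rw [show c - 1 + 1 = c from by omega]; omega
  · -- b ≠ p+1 : all of a, b, c, c+1 differ from p+1; a ≠ p; c ≠ p; c+1 ≠ p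
    rcases le_or_gt (c + 1) s.length with hcle | hcgt
    · have ea := G1 s t (q := a) (by omega)
      have eb := G1 s t (q := b) (by omega)
      have ec := G1 s t (q := c) (by omega)
      have ec1 := G1 s t (q := c + 1) hcle
      exact ⟨a, b, c, hab, hbc, by omega, by omega, by omega, by omega⟩
    · have hcge : s.length + 2 ≤ c := by omega
      have ec := G3 s t hcge (by omega)
      have ec1 := G3 s t (q := c + 1) (by omega) hc
      rw [Nat.add_sub_cancel] at ec1
      rcases le_or_gt b s.length with hble | hbgt
      · have ea := G1 s t (q := a) (by omega)
        have eb := G1 s t (q := b) hble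
        refine ⟨a, b, c - 1, hab, by omega, ?_, ?_, ?_, ?_⟩
        · rw [show c - 1 + 1 = c from by omega]; omega
        · omega
        · rw [show c - 1 + 1 = c from by omega]; omega
        · rw [show c - 1 + 1 = c from by omega]; omega
      · have hbge : s.length + 2 ≤ b := by omega
        have eb := G3 s t hbge (by omega)
        rcases le_or_gt a s.length with hale | hagt
        · have ea := G1 s t (q := a) hale
          refine ⟨a, b - 1, c - 1, by omega, by omega, ?_, ?_, ?_, ?_⟩
          · rw [show c - 1 + 1 = c from by omega]; omega
          · omega
          · rw [show c - 1 + 1 = c from by omega]; omega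
          · rw [show c - 1 + 1 = c from by omega]; omega
        · have hage : s.length + 2 ≤ a := by omega
          have ea := G3 s t hage (by omega)
          refine ⟨a - 1, b - 1, c - 1, by omega, by omega, ?_, ?_, ?_, ?_⟩
          · rw [show c - 1 + 1 = c from by omega]; omega
          · omega
          · rw [show c - 1 + 1 = c from by omega]; omega
          · rw [show c - 1 + 1 = c from by omega]; omega

end Stmt16
namespace Stmt16

lemma indexOf_eq {w : List ℕ} (hnd : w.Nodup) {r x : ℕ} (hr : r < w.length)
    (hx : w.getD r 0 = x) : w.idxOf x = r := by
  subst hx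
  rw [List.getD_eq_getElem _ _ hr]
  exact hnd.idxOf_getElem r hr

/-! ### the key adjacency lemma : in L_n with 1 and 2 both left of n, 1 follows 2 -/

lemma adj21 {n : ℕ} (hn : 3 ≤ n) {w : List ℕ} (hw : IsPermOf n w) (h123 : ¬ Occ123 w)
    (h1 : w.idxOf 1 < w.idxOf n) (h2 : w.idxOf 2 < w.idxOf n) :
    w.idxOf 1 = w.idxOf 2 + 1 := by
  have hlen := permLen hw
  have hm1 : (1 : ℕ) ∈ w := (permMem hw).mpr (by omega)
  have hm2 : (2 : ℕ) ∈ w := (permMem hw).mpr (by omega)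
  have hmn : n ∈ w := (permMem hw).mpr (by omega)
  set q := w.idxOf 1 with hq
  set p := w.idxOf 2 with hp
  set r := w.idxOf n with hr
  have hql : q < w.length := permIndexOfLt hm1
  have hpl : p < w.length := permIndexOfLt hm2
  have hrl : r < w.length := permIndexOfLt hmn
  have hv1 : w.getD q 0 = 1 := permGetDIndexOf hm1
  have hv2 : w.getD p 0 = 2 := permGetDIndexOf hm2
  have hvn : w.getD r 0 = n := permGetDIndexOf hmn
  have hqp : q ≠ p := by
    intro h
    have := (List.idxOf_inj (y := 2) hm1).mp (by rw [← hq, ← hp, h])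
    omega
  by_contra hne
  rcases Nat.lt_or_ge q p with hlt | hge
  · -- 1 before 2 : occurrence (q, r)
    have hq1r : q + 1 < r := by omega
    have hq1l : q + 1 < w.length := by omega
    have hne1 : w.getD (q + 1) 0 ≠ 1 := by
      intro h
      have := permInj hw hq1l hql (by rw [h, hv1])
      omega
    have hnen : w.getD (q + 1) 0 ≠ n := by
      intro h
      have := permInj hw hq1l hrl (by rw [h, hvn])
      omega
    have hge1 := permOneLe hw hq1l
    have hlen' := permLeN hw hq1l
    exact h123 ⟨q, r, hq1r, hrl, by omega, by omega⟩
  · -- 2 before 1, not adjacent : occurrence (p, r)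
    have hplt : p < q := by omega
    have hq2 : p + 2 ≤ q := by omega
    have hp1r : p + 1 < r := by
      have : p < r := h2
      rcases eq_or_ne (p + 1) r with h | h
      · omega
      · omega
    have hp1l : p + 1 < w.length := by omega
    have hne1 : w.getD (p + 1) 0 ≠ 1 := by
      intro h
      have := permInj hw hp1l hql (by rw [h, hv1])
      omega
    have hne2 : w.getD (p + 1) 0 ≠ 2 := by
      intro h
      have := permInj hw hp1l hpl (by rw [h, hv2])
      omega
    have hnen : w.getD (p + 1) 0 ≠ n := by
      intro h
      have := permInj hw hp1l hrl (by rw [h, hvn])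
      omega
    have hge1 := permOneLe hw hp1l
    have hlen' := permLeN hw hp1l
    exact h123 ⟨p, r, hp1r, hrl, by omega, by omega⟩

/-! ### facts about the excluded permutation -/

lemma excl_len {n : ℕ} (hn : 1 ≤ n) : (excludedPerm n).length = n := by
  simp [excludedPerm]; omega

lemma excl_getD {n i : ℕ} (hi : i < n - 1) :
    (excludedPerm n).getD i 0 = n - 1 - i := by
  have hlen : (((List.range (n-1)).map (· + 1)).reverse).length = n - 1 := by simp
  rw [excludedPerm, List.getD_append _ _ _ _ (by rw [hlen]; exact hi),
    List.getD_eq_getElem _ _ (by rw [hlen]; exact hi)]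
  rw [List.getElem_reverse]
  simp only [List.getElem_map, List.getElem_range, List.length_map, List.length_range]
  omega

lemma excl_getD_last {n : ℕ} (hn : 1 ≤ n) : (excludedPerm n).getD (n - 1) 0 = n := by
  have hlen : (((List.range (n-1)).map (· + 1)).reverse).length = n - 1 := by simp
  rw [excludedPerm, List.getD_append_right _ _ _ _ (by rw [hlen])]
  rw [hlen]
  simp

lemma excl_perm {n : ℕ} (hn : 1 ≤ n) : IsPermOf n (excludedPerm n) := by
  unfold IsPermOf excludedPerm
  have h1 : (List.range n).map (· + 1) = (List.range (n-1)).map (· + 1) ++ [n] := by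
    have : n = (n - 1) + 1 := by omega
    rw [this, List.range_succ, List.map_append]
    simp
  rw [h1]
  exact List.Perm.append_right _ (List.reverse_perm _)

lemma excl_not123 {n : ℕ} (hn : 1 ≤ n) : ¬ Occ123 (excludedPerm n) := by
  rintro ⟨a, c, hac, hc, h1, h2⟩
  rw [excl_len hn] at hc
  have ha : a + 1 < n - 1 := by
    rcases Nat.lt_or_ge (a + 1) (n - 1) with h | h
    · exact h
    · -- a+1 ≥ n-1 : then c ≥ n impossible since c ≤ n-1 and c > a+1
      omega
  rw [excl_getD (by omega), excl_getD ha] at h1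
  omega

lemma excl_not4123 {n : ℕ} (hn : 1 ≤ n) : ¬ Occ4123 (excludedPerm n) := by
  rintro ⟨a, b, c, hab, hbc, hc, h1, h2, h3⟩
  rw [excl_len hn] at hc
  rcases Nat.lt_or_ge (c + 1) (n - 1) with h | h
  · rw [excl_getD (by omega), excl_getD h] at h2
    omega
  · have hc1 : c + 1 = n - 1 := by omega
    rw [hc1, excl_getD_last hn] at h3
    have ha : a < n - 1 := by omega
    rw [excl_getD ha] at h3
    omega

lemma excl_mem_Lset {n : ℕ} (hn : 1 ≤ n) : excludedPerm n ∈ Lset n :=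
  ⟨excl_perm hn, excl_not123 hn, excl_not4123 hn⟩

lemma excl_idx1 {n : ℕ} (hn : 2 ≤ n) : (excludedPerm n).idxOf 1 = n - 2 := by
  refine indexOf_eq (permNodup (excl_perm (by omega))) (by rw [excl_len (by omega)]; omega) ?_
  rw [excl_getD (by omega)]
  omega

lemma excl_idx2 {n : ℕ} (hn : 3 ≤ n) : (excludedPerm n).idxOf 2 = n - 3 := by
  refine indexOf_eq (permNodup (excl_perm (by omega))) (by rw [excl_len (by omega)]; omega) ?_
  rw [excl_getD (by omega)]
  omega

lemma excl_idxn {n : ℕ} (hn : 1 ≤ n) : (excludedPerm n).idxOf n = n - 1 := by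
  refine indexOf_eq (permNodup (excl_perm hn)) (by rw [excl_len hn]; omega) ?_
  exact excl_getD_last hn

end Stmt16
namespace Stmt16

def Eset (n : ℕ) : Set (List ℕ) := {w ∈ Lset n | w.idxOf 1 < w.idxOf n}
def Fset (n : ℕ) : Set (List ℕ) := {w ∈ Eset n | w.idxOf 2 < w.idxOf n}
def Cset' (n : ℕ) : Set (List ℕ) := {w ∈ Eset n | w.idxOf n < w.idxOf 2}

/-- split a permutation at the letter 1 -/
lemma split_at_one {m : ℕ} {v : List ℕ} (hv : IsPermOf m v) (hm : 1 ≤ m) :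
    ∃ s t, v = vof s t ∧ s.length = v.idxOf 1 ∧
      (∀ x ∈ s, 2 ≤ x) ∧ (∀ x ∈ t, 2 ≤ x) := by
  have h1 : (1 : ℕ) ∈ v := (permMem hv).mpr (by omega)
  set p := v.idxOf 1 with hp
  have hpl : p < v.length := permIndexOfLt h1
  refine ⟨v.take p, v.drop (p + 1), ?_, by simp [hpl.le], ?_, ?_⟩
  · have hvp : v[p] = 1 := List.getElem_idxOf hpl
    rw [vof]
    conv_lhs => rw [← List.take_append_drop p v]
    rw [List.drop_eq_getElem_cons hpl, hvp]
  · intro x hx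
    obtain ⟨i, hi, hxi⟩ := List.mem_iff_getElem.mp hx
    have hi' : i < p := by simpa [hpl.le] using hi
    rw [List.getElem_take] at hxi
    have hxv : x ∈ v := hxi ▸ List.getElem_mem (by omega)
    have hx1 : x ≠ 1 := by
      intro h
      have : v.getD i 0 = v.getD p 0 := by
        rw [List.getD_eq_getElem _ _ (by omega), List.getD_eq_getElem _ _ hpl, hxi,
          List.getElem_idxOf hpl, h]
      have := permInj hv (by omega) hpl this
      omega
    have := ((permMem hv).mp hxv).1
    omega
  · intro x hx
    obtain ⟨i, hi, hxi⟩ := List.mem_iff_getElem.mp hx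
    have hi' : p + 1 + i < v.length := by
      have := List.length_drop (i := p + 1) (l := v)
      omega
    rw [List.getElem_drop] at hxi
    have hxv : x ∈ v := hxi ▸ List.getElem_mem (by omega)
    have hx1 : x ≠ 1 := by
      intro h
      have : v.getD (p + 1 + i) 0 = v.getD p 0 := by
        rw [List.getD_eq_getElem _ _ hi', List.getD_eq_getElem _ _ hpl, hxi,
          List.getElem_idxOf hpl, h]
      have := permInj hv hi' hpl this
      omega
    have := ((permMem hv).mp hxv).1
    omega

/-- forward direction : `psi` maps `E_m` into `F_{m+1}` -/
lemma psi_mem_F {m : ℕ} (hm : 2 ≤ m) {v : List ℕ} (hv : v ∈ Eset m) :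
    psi v ∈ Fset (m + 1) := by
  obtain ⟨⟨hperm, h123, h4123⟩, hidx⟩ := hv
  obtain ⟨s, t, hsplit, hslen, h2s, h2t⟩ := split_at_one hperm (by omega)
  have hne1s : ∀ x ∈ s, x ≠ 1 := fun x hx => by have := h2s x hx; omega
  have hne1t : ∀ x ∈ t, x ≠ 1 := fun x hx => by have := h2t x hx; omega
  have hpsiw : psi v = wof s t := by rw [hsplit, ← wof_eq_psi hne1s hne1t]
  have hvperm : IsPermOf m (vof s t) := hsplit ▸ hperm
  have hwperm : IsPermOf (m + 1) (wof s t) := by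
    rw [wof_eq_psi hne1s hne1t]
    exact psi_perm hvperm (by omega)
  have hlv := len_vof s t
  have hlw := len_wof s t
  have hvl : v.length = m := permLen hperm
  -- index facts
  have hmm : m ∈ v := (permMem hperm).mpr (by omega)
  set j := v.idxOf m with hj
  have hjl : j < v.length := permIndexOfLt hmm
  have hpj : s.length < j := by rw [hslen]; exact hidx
  have hwnd : (wof s t).Nodup := permNodup hwperm
  have hidx2 : (wof s t).idxOf 2 = s.length := by
    refine indexOf_eq hwnd (by omega) ?_
    rw [G1 s t (le_refl _), G4]
  have hidx1 : (wof s t).idxOf 1 = s.length + 1 := by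
    refine indexOf_eq hwnd (by omega) ?_
    exact G2 s t
  have hvj : (vof s t).getD j 0 = m := by
    rw [← hsplit]
    exact permGetDIndexOf hmm
  have hjl' : j < s.length + 1 + t.length := by
    rw [← hlv, ← hsplit]
    exact hjl
  have hidxn : (wof s t).idxOf (m + 1) = j + 1 := by
    refine indexOf_eq hwnd (by rw [hlw]; omega) ?_
    rw [G3' s t (by omega) (by rw [hlw]; omega), hvj]
  rw [hpsiw]
  refine ⟨⟨⟨hwperm, ?_, ?_⟩, ?_⟩, ?_⟩
  · intro hocc
    exact h123 (by rw [hsplit]; exact T1 h2s h2t hocc)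
  · intro hocc
    exact h4123 (by rw [hsplit]; exact T3 h2s h2t hocc)
  · rw [hidx1, hidxn]; omega
  · rw [hidx2, hidxn]; omega

/-- backward direction : every member of `F_n` is `psi` of a member of `E_{n-1}` -/
lemma F_mem_psi {n : ℕ} (hn : 3 ≤ n) {w : List ℕ} (hw : w ∈ Fset n) :
    ∃ v ∈ Eset (n - 1), psi v = w := by
  obtain ⟨⟨⟨hperm, h123, h4123⟩, hidx1n⟩, hidx2n⟩ := hw
  have hlen := permLen hperm
  have hadj : w.idxOf 1 = w.idxOf 2 + 1 := adj21 hn hperm h123 hidx1n hidx2n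
  have hm1 : (1 : ℕ) ∈ w := (permMem hperm).mpr (by omega)
  have hm2 : (2 : ℕ) ∈ w := (permMem hperm).mpr (by omega)
  have hmn : n ∈ w := (permMem hperm).mpr (by omega)
  set p := w.idxOf 2 with hp
  have hp1l : p + 1 < w.length := by rw [← hadj]; exact permIndexOfLt hm1
  have hpl : p < w.length := by omega
  have hv2 : w.getD p 0 = 2 := permGetDIndexOf hm2
  have hv1 : w.getD (p + 1) 0 = 1 := by rw [← hadj]; exact permGetDIndexOf hm1
  -- split w
  set s' := w.take p with hs'
  set t' := w.drop (p + 2) with ht'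
  have hsplit : w = s' ++ 2 :: 1 :: t' := by
    conv_lhs => rw [← List.take_append_drop p w]
    rw [List.drop_eq_getElem_cons hpl, List.drop_eq_getElem_cons (by omega : p + 1 < w.length)]
    rw [← List.getD_eq_getElem _ 0 hpl, ← List.getD_eq_getElem _ 0 (by omega : p + 1 < w.length),
      hv2, hv1]
  have hs'len : s'.length = p := by simp [hs', hpl.le]
  -- elements of s' and t' are ≥ 3
  have hval3 : ∀ (i : ℕ) (h : i < w.length), i ≠ p → i ≠ p + 1 → 3 ≤ w[i] := by
    intro i h hip hip1
    have h1 : w[i] ≠ 1 := by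
      intro heq
      have hgp1 : w.getD i 0 = w.getD (p + 1) 0 := by
        rw [List.getD_eq_getElem _ _ h, List.getD_eq_getElem _ _ hp1l, heq]
        rw [List.getD_eq_getElem _ _ hp1l] at hv1
        rw [hv1]
      exact hip1 (permInj hperm h hp1l hgp1)
    have h2 : w[i] ≠ 2 := by
      intro heq
      have hgp2 : w.getD i 0 = w.getD p 0 := by
        rw [List.getD_eq_getElem _ _ h, List.getD_eq_getElem _ _ hpl, heq]
        rw [List.getD_eq_getElem _ _ hpl] at hv2
        rw [hv2]
      exact hip (permInj hperm h hpl hgp2)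
    have := ((permMem hperm).mp (List.getElem_mem h)).1
    omega
  have h3s' : ∀ x ∈ s', 3 ≤ x := by
    intro x hx
    obtain ⟨i, hi, hxi⟩ := List.mem_iff_getElem.mp hx
    have hi' : i < p := by rw [hs'len] at hi; exact hi
    simp only [hs', List.getElem_take] at hxi
    exact (hval3 i (by omega) (by omega) (by omega)).trans_eq hxi
  have h3t' : ∀ x ∈ t', 3 ≤ x := by
    intro x hx
    obtain ⟨i, hi, hxi⟩ := List.mem_iff_getElem.mp hx
    have hil : p + 2 + i < w.length := by
      have := List.length_drop (i := p + 2) (l := w)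
      rw [ht'] at hi
      omega
    simp only [ht', List.getElem_drop] at hxi
    exact (hval3 _ hil (by omega) (by omega)).trans_eq hxi
  set s := s'.map (· - 1) with hsdef
  set t := t'.map (· - 1) with htdef
  have hmaps : s.map (· + 1) = s' := by
    rw [hsdef, List.map_map]
    conv_rhs => rw [← List.map_id s']
    refine List.map_congr_left ?_
    intro x hx
    have := h3s' x hx
    simp
    omega
  have hmapt : t.map (· + 1) = t' := by
    rw [htdef, List.map_map]
    conv_rhs => rw [← List.map_id t']
    refine List.map_congr_left ?_
    intro x hx
    have := h3t' x hx
    simp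
    omega
  have h2s : ∀ x ∈ s, 2 ≤ x := by
    intro x hx
    obtain ⟨y, hy, rfl⟩ := List.mem_map.mp hx
    have := h3s' y hy
    omega
  have h2t : ∀ x ∈ t, 2 ≤ x := by
    intro x hx
    obtain ⟨y, hy, rfl⟩ := List.mem_map.mp hx
    have := h3t' y hy
    omega
  have hwof : wof s t = w := by
    rw [wof, hmaps, hmapt, hsplit]
  have hslen : s.length = p := by rw [hsdef, List.length_map, hs'len]
  have hne1s : ∀ x ∈ s, x ≠ 1 := fun x hx => by have := h2s x hx; omega
  have hne1t : ∀ x ∈ t, x ≠ 1 := fun x hx => by have := h2t x hx; omega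
  have hpsi : psi (vof s t) = w := by rw [← wof_eq_psi hne1s hne1t, hwof]
  have hge1v : ∀ x ∈ vof s t, 1 ≤ x := by
    intro x hx
    rw [vof] at hx
    rcases List.mem_append.mp hx with h | h
    · have := h2s x h; omega
    · rcases List.mem_cons.mp h with h | h
      · omega
      · have := h2t x h; omega
  have hvperm : IsPermOf (n - 1) (vof s t) := by
    have : vof s t = phi w := by rw [← hpsi, phi_psi hge1v]
    rw [this]
    exact phi_perm hperm (by omega)
  have hlv := len_vof s t
  have hlw := len_wof s t
  -- index of n-1 in v
  set r := w.idxOf n with hrd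
  have hrl : r < w.length := permIndexOfLt hmn
  have hvn : w.getD r 0 = n := permGetDIndexOf hmn
  have hrp : p < r := hidx2n
  have hrp1 : r ≠ p + 1 := by
    intro h
    rw [h, hv1] at hvn
    omega
  have hrge : p + 2 ≤ r := by omega
  have hvnd : (vof s t).Nodup := permNodup hvperm
  have hidxv1 : (vof s t).idxOf 1 = p := by
    refine indexOf_eq hvnd (by omega) ?_
    rw [← hslen, G4]
  have hwr : w.getD r 0 = (vof s t).getD (r - 1) 0 + 1 := by
    rw [← hwof]
    exact G3 s t (by omega) (by rw [hwof]; exact hrl)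
  have hidxvn : (vof s t).idxOf (n - 1) = r - 1 := by
    refine indexOf_eq hvnd ?_ ?_
    · rw [hlv]
      rw [← hwof, hlw] at hrl
      have := hslen
      omega
    · omega
  refine ⟨vof s t, ⟨⟨hvperm, ?_, ?_⟩, ?_⟩, hpsi⟩
  · intro hocc
    exact h123 (by rw [← hwof]; exact T2 hocc)
  · intro hocc
    exact h4123 (by rw [← hwof]; exact T4 h2s h2t hocc)
  · rw [hidxv1, hidxvn]
    omega

end Stmt16
namespace Stmt16

lemma Eset_sub (n : ℕ) : Eset n ⊆ Lset n := fun _ h => h.1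
lemma Fset_sub (n : ℕ) : Fset n ⊆ Lset n := fun _ h => h.1.1
lemma Cset'_sub (n : ℕ) : Cset' n ⊆ Lset n := fun _ h => h.1.1
lemma Lstar_sub (n : ℕ) : Lstar n ⊆ Lset n := fun _ h => h.1
lemma Bset_sub (n : ℕ) : Bset n ⊆ Lset n := fun _ h => h.1.1
lemma Cset_sub (n : ℕ) : Cset n ⊆ Lset n := fun _ h => h.1.1

lemma Eset_finite (n : ℕ) : (Eset n).Finite := (Lset_finite n).subset (Eset_sub n)
lemma Fset_finite (n : ℕ) : (Fset n).Finite := (Lset_finite n).subset (Fset_sub n)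
lemma Cset'_finite (n : ℕ) : (Cset' n).Finite := (Lset_finite n).subset (Cset'_sub n)
lemma Lstar_finite (n : ℕ) : (Lstar n).Finite := (Lset_finite n).subset (Lstar_sub n)
lemma Bset_finite (n : ℕ) : (Bset n).Finite := (Lset_finite n).subset (Bset_sub n)
lemma Cset_finite (n : ℕ) : (Cset n).Finite := (Lset_finite n).subset (Cset_sub n)

/-- |F_n| = |E_{n-1}| -/
lemma card_F {n : ℕ} (hn : 3 ≤ n) : (Fset n).ncard = (Eset (n - 1)).ncard := by
  have himg : Fset n = psi '' Eset (n - 1) := by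
    ext w
    constructor
    · intro hw
      obtain ⟨v, hv, hpsi⟩ := F_mem_psi hn hw
      exact ⟨v, hv, hpsi⟩
    · rintro ⟨v, hv, rfl⟩
      have := psi_mem_F (m := n - 1) (by omega) hv
      rwa [show n - 1 + 1 = n from by omega] at this
  rw [himg]
  refine Set.ncard_image_of_injOn ?_
  intro v hv v' hv' heq
  exact psi_injOn (fun x hx => ((permMem hv.1.1).mp hx).1)
    (fun x hx => ((permMem hv'.1.1).mp hx).1) heq

/-- |E_n| = |C'_n| + |F_n| for n ≥ 3 -/
lemma card_E_split {n : ℕ} (hn : 3 ≤ n) :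
    (Eset n).ncard = (Cset' n).ncard + (Fset n).ncard := by
  have hunion : Eset n = Cset' n ∪ Fset n := by
    ext w
    constructor
    · intro hw
      have hperm := hw.1.1
      have hm2 : (2 : ℕ) ∈ w := (permMem hperm).mpr (by omega)
      have hmn : n ∈ w := (permMem hperm).mpr (by omega)
      have hne : w.idxOf n ≠ w.idxOf 2 := by
        intro h
        have := (List.idxOf_inj hmn).mp h
        omega
      rcases Nat.lt_or_ge (w.idxOf n) (w.idxOf 2) with h | h
      · exact Or.inl ⟨hw, h⟩
      · exact Or.inr ⟨hw, by omega⟩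
    · rintro (⟨hw, _⟩ | ⟨hw, _⟩) <;> exact hw
  rw [hunion]
  refine Set.ncard_union_eq ?_ (Cset'_finite n) (Fset_finite n)
  rw [Set.disjoint_left]
  rintro w ⟨_, h1⟩ ⟨_, h2⟩
  omega

lemma Cset'_eq_Cset {n : ℕ} (hn : 3 ≤ n) : Cset' n = Cset n := by
  ext w
  constructor
  · rintro ⟨⟨hL, h1n⟩, hn2⟩
    refine ⟨⟨hL, ?_⟩, h1n, hn2⟩
    intro hmem
    rw [Set.mem_singleton_iff] at hmem
    subst hmem
    rw [excl_idxn (by omega), excl_idx2 hn] at hn2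
    omega
  · rintro ⟨⟨hL, _⟩, h1n, hn2⟩
    exact ⟨⟨hL, h1n⟩, hn2⟩

lemma Cset_two : Cset 2 = ∅ := by
  ext w
  simp only [Cset, Set.mem_setOf_eq, Set.mem_empty_iff_false, iff_false]
  rintro ⟨_, _, h⟩
  omega

lemma short_not123 {w : List ℕ} (h : w.length ≤ 2) : ¬ Occ123 w := by
  rintro ⟨a, c, hac, hc, _, _⟩
  omega

lemma short_not4123 {w : List ℕ} (h : w.length ≤ 3) : ¬ Occ4123 w := by
  rintro ⟨a, b, c, hab, hbc, hc, _, _, _⟩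
  omega

lemma Eset_two : Eset 2 = {[1, 2]} := by
  ext w
  constructor
  · rintro ⟨⟨hperm, _, _⟩, hidx⟩
    have hlen : w.length = 2 := permLen hperm
    obtain ⟨a, b, rfl⟩ : ∃ a b, w = [a, b] := by
      match w, hlen with
      | [a, b], _ => exact ⟨a, b, rfl⟩
    obtain ⟨ha1, ha2⟩ := (permMem hperm).mp (show a ∈ [a, b] by simp)
    obtain ⟨hb1, hb2⟩ := (permMem hperm).mp (show b ∈ [a, b] by simp)
    have hab : a ≠ b := by
      have := permNodup hperm
      simp at this
      exact this
    interval_cases a <;> interval_cases b <;> simp_all [List.idxOf_cons]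
  · rintro rfl
    refine ⟨⟨?_, short_not123 (by simp), short_not4123 (by simp)⟩, by simp [List.idxOf_cons]⟩
    show List.Perm _ _
    have : (List.range 2).map (· + 1) = [1, 2] := by decide
    rw [this]

lemma card_E {n : ℕ} (hn : 2 ≤ n) :
    (Eset n).ncard = 1 + ∑ d ∈ Finset.range (n - 1), (Cset (n - d)).ncard := by
  induction n, hn using Nat.le_induction with
  | base =>
    rw [Eset_two]
    simp [Cset_two]
  | succ n hn ih =>
    have h3 : 3 ≤ n + 1 := by omega
    rw [card_E_split h3, Cset'_eq_Cset h3, card_F h3]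
    simp only [Nat.add_sub_cancel]
    rw [ih]
    have key := Finset.sum_range_succ' (fun d => (Cset (n + 1 - d)).ncard) (n - 1)
    rw [show n - 1 + 1 = n from by omega] at key
    rw [key]
    simp only [Nat.sub_zero]
    have hsum : ∑ d ∈ Finset.range (n - 1), (Cset (n - d)).ncard =
        ∑ d ∈ Finset.range (n - 1), (Cset (n + 1 - (d + 1))).ncard := by
      refine Finset.sum_congr rfl fun i _ => ?_
      rw [show n + 1 - (i + 1) = n - i from by omega]
    rw [hsum]
    omega

end Stmt16
namespace Stmt16

def Dset (n : ℕ) : Set (List ℕ) := {w ∈ Lstar n | w.idxOf 1 < w.idxOf n}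

lemma Dset_finite (n : ℕ) : (Dset n).Finite :=
  (Lstar_finite n).subset (fun _ h => h.1)

lemma excl_mem_Eset {n : ℕ} (hn : 2 ≤ n) : excludedPerm n ∈ Eset n := by
  refine ⟨excl_mem_Lset (by omega), ?_⟩
  rw [excl_idx1 hn, excl_idxn (by omega)]
  omega

lemma excl_not_mem_Lstar (n : ℕ) : excludedPerm n ∉ Lstar n := fun h => h.2 rfl

lemma Eset_eq_insert {n : ℕ} (hn : 2 ≤ n) :
    Eset n = insert (excludedPerm n) (Dset n) := by
  ext w
  constructor
  · rintro ⟨hL, hidx⟩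
    rcases eq_or_ne w (excludedPerm n) with rfl | hne
    · exact Or.inl rfl
    · exact Or.inr ⟨⟨hL, hne⟩, hidx⟩
  · rintro (rfl | ⟨⟨hL, _⟩, hidx⟩)
    · exact excl_mem_Eset hn
    · exact ⟨hL, hidx⟩

lemma card_Dset {n : ℕ} (hn : 2 ≤ n) : (Eset n).ncard = (Dset n).ncard + 1 := by
  rw [Eset_eq_insert hn]
  exact Set.ncard_insert_of_notMem
    (fun h => excl_not_mem_Lstar n h.1) (Dset_finite n)

lemma card_Lset {n : ℕ} (hn : 2 ≤ n) : (Lset n).ncard = (Lstar n).ncard + 1 := by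
  have h : insert (excludedPerm n) (Lstar n) = Lset n := by
    rw [Lstar, Set.insert_diff_singleton, Set.insert_eq_self.mpr (excl_mem_Lset (by omega))]
  rw [← h, Set.ncard_insert_of_notMem (excl_not_mem_Lstar n) (Lstar_finite n)]

lemma card_Lstar_split {n : ℕ} (hn : 2 ≤ n) :
    (Lstar n).ncard = (Bset n).ncard + (Dset n).ncard := by
  have hunion : Lstar n = Bset n ∪ Dset n := by
    ext w
    constructor
    · intro hw
      have hperm := hw.1.1
      have hm1 : (1 : ℕ) ∈ w := (permMem hperm).mpr (by omega)
      have hmn : n ∈ w := (permMem hperm).mpr (by omega)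
      have hne : w.idxOf n ≠ w.idxOf 1 := by
        intro h
        have := (List.idxOf_inj hmn).mp h
        omega
      rcases Nat.lt_or_ge (w.idxOf n) (w.idxOf 1) with h | h
      · exact Or.inl ⟨hw, h⟩
      · exact Or.inr ⟨hw, by omega⟩
    · rintro (⟨hw, _⟩ | ⟨hw, _⟩) <;> exact hw
  rw [hunion]
  refine Set.ncard_union_eq ?_ (Bset_finite n) (Dset_finite n)
  rw [Set.disjoint_left]
  rintro w ⟨_, h1⟩ ⟨_, h2⟩
  omega

lemma endsWith {n : ℕ} (hn : 1 ≤ n) {S : Set (List ℕ)} (hS : S ⊆ Lset n) :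
    ∀ w ∈ S, ∃ u j, 1 ≤ j ∧ j ≤ n ∧ w = u ++ [j] := by
  intro w hw
  have hperm := (hS hw).1
  have hlen : w.length = n := permLen hperm
  have hne : w ≠ [] := by
    intro h
    rw [h] at hlen
    simp at hlen
    omega
  obtain ⟨h1, h2⟩ := (permMem hperm).mp (List.getLast_mem hne)
  exact ⟨w.dropLast, w.getLast hne, h1, h2, (List.dropLast_append_getLast hne).symm⟩

lemma card_B {n : ℕ} (hn : 2 ≤ n) :
    (Bset n).ncard = ∑ j ∈ Finset.Icc 1 n, bLast n j :=
  ncard_eq_sum_last (Bset n) (Bset_finite n) n (endsWith (by omega) (Bset_sub n))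

lemma card_C {m : ℕ} (hm : 1 ≤ m) :
    (Cset m).ncard = ∑ i ∈ Finset.Icc 1 m, cLast m i :=
  ncard_eq_sum_last (Cset m) (Cset_finite m) m (endsWith hm (Cset_sub m))

end Stmt16

open Stmt16 in
theorem stmt16 (n : ℕ) (hn : 2 ≤ n) :
    (Lset n).ncard = 1 + (∑ j ∈ Finset.Icc 1 n, bLast n j) +
      ∑ d ∈ Finset.Icc 0 (n - 2), ∑ i ∈ Finset.Icc 1 (n - d), cLast (n - d) i := by
  have hIcc : Finset.Icc 0 (n - 2) = Finset.range (n - 1) := by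
    ext x
    simp only [Finset.mem_Icc, Finset.mem_range]
    omega
  have hC : ∀ d ∈ Finset.range (n - 1),
      (∑ i ∈ Finset.Icc 1 (n - d), cLast (n - d) i) = (Cset (n - d)).ncard := by
    intro d hd
    rw [Finset.mem_range] at hd
    exact (card_C (m := n - d) (by omega)).symm
  rw [hIcc, Finset.sum_congr rfl hC]
  have h1 := card_Lset hn
  have h2 := card_Lstar_split hn
  have h3 := card_Dset hn
  have h4 := card_E hn
  have h5 := card_B hn
  omega
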